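/- Let q = 2n+1 be an odd prime power and χ_q a generator of the group of multiplicative characters of F_q. For each k with 1 ≤ k ≤ n, set λ_k(χ_q) = Σ_{x ∈ S_q} φ_q(1+x)χ_q^k(x), where S_q is the set of nonzero squares of F_q. Then for each such k, the vector v_k = (χ_q^k(s_1), …, χ_q^k(s_n))ᵀ satisfies A_q v_k = λ_k(χ_q) v_k, the vectors v_1, …, v_n are linearly independent over ℂ, and λ_1(χ_q), …, λ_n(χ_q) are precisely all the eigenvalues of A_q; in particular det A_q = ∏_{k=1}^n λ_k(χ_q). -/

import Mathlib

open Finset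

open scoped Classical in
/-- `λ_k(χ) = ∑_{x ∈ S_q} φ(1+x) χ^k(x)`, the sum over the nonzero squares `S_q` of `F_q`. -/
noncomputable def lamSum {F : Type*} [Field F] [Fintype F] (φ χ : MulChar F ℂ) (k : ℕ) : ℂ :=
  ∑ x ∈ Finset.univ.filter (fun x : F => x ≠ 0 ∧ IsSquare x), φ (1 + x) * (χ ^ k) x

open MulChar in
lemma stmt10_chi_inj {F : Type*} [Field F] [Fintype F] (χ : MulChar F ℂ)
    (hχ : ∀ ψ : MulChar F ℂ, ψ ∈ Subgroup.zpowers χ)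
    {a b : F} (ha : a ≠ 0) (hb : b ≠ 0) (h : χ a = χ b) : a = b := by
  by_contra hab
  have hne : a * b⁻¹ ≠ 1 := fun hh => hab (by field_simp at hh; exact hh)
  haveI : NeZero ((Monoid.exponent Fˣ : ℕ) : ℂ) := by
    have : Monoid.exponent Fˣ ≠ 0 := Monoid.exponent_ne_zero_of_finite
    exact ⟨by exact_mod_cast this⟩
  obtain ⟨ψ, hψ⟩ := MulChar.exists_apply_ne_one_of_hasEnoughRootsOfUnity F ℂ hne
  obtain ⟨m, hm⟩ := hχ ψ
  apply hψ
  have key : ∀ (c : F), c ≠ 0 → ψ c = (χ c) ^ m := by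
    intro c hc
    have h2 : ψ.toUnitHom = χ.toUnitHom ^ m := by
      rw [show ψ.toUnitHom = mulEquivToUnitHom ψ from rfl, ← hm, map_zpow]; rfl
    have hu : ((hc.isUnit.unit : Fˣ) : F) = c := hc.isUnit.unit_spec
    calc ψ c = (ψ.toUnitHom hc.isUnit.unit : ℂ) := by rw [coe_toUnitHom, hu]
      _ = ((χ.toUnitHom hc.isUnit.unit : ℂˣ) : ℂ) ^ m := by
            rw [h2]; exact Units.val_zpow_eq_zpow_val _ m
      _ = (χ c) ^ m := by rw [coe_toUnitHom, hu]
  have hb' : (b : F)⁻¹ ≠ 0 := inv_ne_zero hb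
  rw [map_mul, key a ha, key b⁻¹ hb', h, ← mul_zpow, ← map_mul, mul_inv_cancel₀ hb,
    map_one, one_zpow]

open scoped Classical in
lemma stmt10_eig {F : Type*} [Field F] [Fintype F] {n : ℕ} (φ χ : MulChar F ℂ)
    (hφ1 : φ ^ 2 = 1) (s : Fin n → F) (hs : Function.Injective s)
    (hs' : ∀ x : F, (∃ i, s i = x) ↔ (x ≠ 0 ∧ IsSquare x)) (k : ℕ) :
    (Matrix.of fun i j : Fin n => φ (s i + s j)).mulVec (fun i => (χ ^ k) (s i)) =
      lamSum φ χ k • (fun i => (χ ^ k) (s i)) := by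
  have hφsq : ∀ x : F, x ≠ 0 → IsSquare x → φ x = 1 := by
    rintro x hx ⟨a, rfl⟩
    have ha : IsUnit a := by
      rcases eq_or_ne a 0 with rfl | h
      · simp at hx
      · exact h.isUnit
    calc φ (a * a) = φ a * φ a := map_mul φ a a
      _ = (φ ^ 2) a := by rw [pow_two]; rfl
      _ = 1 := by rw [hφ1, ← ha.unit_spec, MulChar.one_apply_coe]
  funext i
  obtain ⟨hs0, hssq⟩ := (hs' (s i)).1 ⟨i, rfl⟩
  show (∑ j, (Matrix.of fun i j : Fin n => φ (s i + s j)) i j * (χ ^ k) (s j)) = _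
  have step1 : (∑ j, φ (s i + s j) * (χ ^ k) (s j)) =
      ∑ x ∈ Finset.univ.filter (fun x : F => x ≠ 0 ∧ IsSquare x),
        φ (s i + x) * (χ ^ k) x := by
    refine Finset.sum_bij (fun j _ => s j) ?_ ?_ ?_ ?_
    · intro j _; simp only [Finset.mem_filter, Finset.mem_univ, true_and]
      exact (hs' (s j)).1 ⟨j, rfl⟩
    · intro a _ b _ h; exact hs h
    · intro x hx
      simp only [Finset.mem_filter, Finset.mem_univ, true_and] at hx
      obtain ⟨j, hj⟩ := (hs' x).2 hx
      exact ⟨j, Finset.mem_univ j, hj⟩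
    · intro j _; rfl
  have step2 : (∑ x ∈ Finset.univ.filter (fun x : F => x ≠ 0 ∧ IsSquare x),
        φ (s i + x) * (χ ^ k) x) =
      ∑ y ∈ Finset.univ.filter (fun x : F => x ≠ 0 ∧ IsSquare x),
        φ (s i + s i * y) * (χ ^ k) (s i * y) := by
    refine Finset.sum_nbij' (fun x => (s i)⁻¹ * x) (fun y => s i * y)
      ?_ ?_ ?_ ?_ ?_
    · intro x hx
      simp only [Finset.mem_filter, Finset.mem_univ, true_and] at hx ⊢
      exact ⟨mul_ne_zero (inv_ne_zero hs0) hx.1, (hssq.inv).mul hx.2⟩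
    · intro y hy
      simp only [Finset.mem_filter, Finset.mem_univ, true_and] at hy ⊢
      exact ⟨mul_ne_zero hs0 hy.1, hssq.mul hy.2⟩
    · intro x _; field_simp
    · intro y _; field_simp
    · intro x hx; rw [mul_inv_cancel_left₀ hs0]
  have step3 : ∀ y : F,
      φ (s i + s i * y) * (χ ^ k) (s i * y) =
        (χ ^ k) (s i) * (φ (1 + y) * (χ ^ k) y) := by
    intro y
    have : s i + s i * y = s i * (1 + y) := by ring
    rw [this, map_mul, map_mul, hφsq _ hs0 hssq, one_mul]
    ring
  simp only [Matrix.of_apply] at *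
  rw [step1, step2]
  simp only [step3, ← Finset.mul_sum]
  rw [Pi.smul_apply, smul_eq_mul, lamSum]
  ring

/-- Let `q = 2n+1` be an odd prime power and `χ` a generator of the group of
multiplicative characters of `F_q`. For `1 ≤ k ≤ n` set `λ_k = ∑_{x ∈ S_q} φ(1+x)χ^k(x)`.
Then each vector `v_k = (χ^k(s_1), …, χ^k(s_n))ᵀ` satisfies `A_q v_k = λ_k v_k`, the vectors
`v_1, …, v_n` are linearly independent over `ℂ`, the numbers `λ_1, …, λ_n` are precisely all
the eigenvalues of `A_q`, and `det A_q = ∏_{k=1}^n λ_k`. -/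
theorem stmt_10 {F : Type*} [Field F] [Fintype F] (n : ℕ)
    (hcard : Fintype.card F = 2 * n + 1)
    (φ χ : MulChar F ℂ)
    (hφ : φ ^ 2 = 1 ∧ φ ≠ 1)
    (hχ : ∀ ψ : MulChar F ℂ, ψ ∈ Subgroup.zpowers χ)
    (s : Fin n → F)
    (hs : Function.Injective s)
    (hs' : ∀ x : F, (∃ i, s i = x) ↔ (x ≠ 0 ∧ IsSquare x)) :
    (∀ k ∈ Finset.Icc 1 n,
        (Matrix.of fun i j : Fin n => φ (s i + s j)).mulVec (fun i => (χ ^ k) (s i)) =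
          lamSum φ χ k • (fun i => (χ ^ k) (s i))) ∧
      LinearIndependent ℂ (fun k : Fin n => (fun i : Fin n => (χ ^ ((k : ℕ) + 1)) (s i))) ∧
      spectrum ℂ (Matrix.of fun i j : Fin n => φ (s i + s j)) =
        {μ : ℂ | ∃ k ∈ Finset.Icc 1 n, lamSum φ χ k = μ} ∧
      (Matrix.of fun i j : Fin n => φ (s i + s j)).det =
        ∏ k ∈ Finset.Icc 1 n, lamSum φ χ k := by
  set A : Matrix (Fin n) (Fin n) ℂ := Matrix.of fun i j : Fin n => φ (s i + s j) with hA
  set z : Fin n → ℂ := fun i => χ (s i) with hzdef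
  have hsne : ∀ i, s i ≠ 0 := fun i => ((hs' (s i)).1 ⟨i, rfl⟩).1
  have hz0 : ∀ i, z i ≠ 0 := by
    intro i
    have hu := (hsne i).isUnit
    rw [hzdef]
    simp only
    rw [← hu.unit_spec, ← MulChar.coe_toUnitHom]
    exact Units.ne_zero _
  have hzinj : Function.Injective z := by
    intro a b hab
    exact hs (stmt10_chi_inj χ hχ (hsne a) (hsne b) hab)
  -- the eigenvector matrix
  set P : Matrix (Fin n) (Fin n) ℂ := Matrix.of fun i k : Fin n => z i ^ ((k : ℕ) + 1) with hP
  have hPfact : P = Matrix.diagonal z * Matrix.vandermonde z := by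
    ext i k
    rw [Matrix.diagonal_mul]
    simp [hP, Matrix.vandermonde, pow_succ']
  have hPdet : IsUnit P.det := by
    rw [hPfact, Matrix.det_mul, Matrix.det_diagonal, isUnit_iff_ne_zero]
    exact mul_ne_zero (Finset.prod_ne_zero_iff.2 fun i _ => hz0 i)
      (Matrix.det_vandermonde_ne_zero_iff.2 hzinj)
  have hPcol : ∀ (k : Fin n) (i : Fin n), (χ ^ ((k : ℕ) + 1)) (s i) = P i k := by
    intro k i
    rw [MulChar.pow_apply' χ (Nat.succ_ne_zero _)]
    rfl
  -- eigen equations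
  have heig : ∀ k : ℕ, A.mulVec (fun i => (χ ^ k) (s i)) =
      lamSum φ χ k • (fun i => (χ ^ k) (s i)) :=
    fun k => stmt10_eig φ χ hφ.1 s hs hs' k
  -- diagonal matrix of eigenvalues
  set D : Matrix (Fin n) (Fin n) ℂ :=
    Matrix.diagonal (fun k : Fin n => lamSum φ χ ((k : ℕ) + 1)) with hD
  have hAP : A * P = P * D := by
    ext i k
    have h1 := congrFun (heig ((k : ℕ) + 1)) i
    simp only [Matrix.mulVec, dotProduct, Pi.smul_apply, smul_eq_mul] at h1
    rw [Matrix.mul_apply, hD, Matrix.mul_diagonal]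
    calc ∑ j, A i j * P j k = ∑ j, A i j * (χ ^ ((k : ℕ) + 1)) (s j) := by
          simp_rw [hPcol]
      _ = lamSum φ χ ((k : ℕ) + 1) * (χ ^ ((k : ℕ) + 1)) (s i) := h1
      _ = P i k * lamSum φ χ ((k : ℕ) + 1) := by rw [hPcol]; ring
  have hAconj : A = P * D * P⁻¹ := by
    calc A = A * (P * P⁻¹) := by rw [Matrix.mul_nonsing_inv P hPdet, Matrix.mul_one]
      _ = (A * P) * P⁻¹ := by rw [Matrix.mul_assoc]
      _ = P * D * P⁻¹ := by rw [hAP]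
  have hdetA : A.det = ∏ k : Fin n, lamSum φ χ ((k : ℕ) + 1) := by
    have h1 : A.det * P.det = P.det * D.det := by
      rw [← Matrix.det_mul, ← Matrix.det_mul, hAP]
    have h2 : A.det = D.det := by
      have hPne : P.det ≠ 0 := hPdet.ne_zero
      exact mul_right_cancel₀ hPne (by rw [h1, mul_comm])
    rw [h2, hD, Matrix.det_diagonal]
  have hprodconv : ∀ f : ℕ → ℂ,
      (∏ k : Fin n, f ((k : ℕ) + 1)) = ∏ k ∈ Finset.Icc 1 n, f k := by
    intro f
    rw [← Finset.Ico_add_one_right_eq_Icc, Finset.prod_Ico_eq_prod_range]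
    rw [Fin.prod_univ_eq_prod_range (fun k => f (k + 1))]
    exact Finset.prod_congr rfl fun k _ => by rw [add_comm]
  refine ⟨fun k _ => heig k, ?_, ?_, ?_⟩
  · -- linear independence
    have : (fun k : Fin n => (fun i : Fin n => (χ ^ ((k : ℕ) + 1)) (s i))) =
        fun k : Fin n => P.transpose k := by
      funext k i
      rw [hPcol]
      rfl
    rw [this]
    exact Matrix.linearIndependent_rows_iff_isUnit.2
      ((Matrix.isUnit_iff_isUnit_det P.transpose).2 (by rwa [Matrix.det_transpose]))
  · -- spectrum
    ext μ
    simp only [Set.mem_setOf_eq]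
    rw [spectrum.mem_iff]
    have hconj : algebraMap ℂ (Matrix (Fin n) (Fin n) ℂ) μ - A =
        P * (algebraMap ℂ (Matrix (Fin n) (Fin n) ℂ) μ - D) * P⁻¹ := by
      rw [Matrix.mul_sub, Matrix.sub_mul, ← hAconj]
      congr 1
      rw [← Algebra.commutes μ P, Matrix.mul_assoc, Matrix.mul_nonsing_inv P hPdet,
        Matrix.mul_one]
    rw [hconj]
    have hdet : (P * (algebraMap ℂ (Matrix (Fin n) (Fin n) ℂ) μ - D) * P⁻¹).det =
        P.det * ((algebraMap ℂ (Matrix (Fin n) (Fin n) ℂ) μ - D).det) * P⁻¹.det := by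
      rw [Matrix.det_mul, Matrix.det_mul]
    have hDdet : (algebraMap ℂ (Matrix (Fin n) (Fin n) ℂ) μ - D).det =
        ∏ k : Fin n, (μ - lamSum φ χ ((k : ℕ) + 1)) := by
      rw [Matrix.algebraMap_eq_diagonal, hD, Matrix.diagonal_sub, Matrix.det_diagonal]
      rfl
    have hPunit : IsUnit P := (Matrix.isUnit_iff_isUnit_det _).2 hPdet
    have hPinvunit : IsUnit P⁻¹ := (Matrix.isUnit_iff_isUnit_det _).2
      (by rw [Matrix.det_nonsing_inv]; exact isUnit_ringInverse.2 hPdet)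
    constructor
    · intro h
      have hdet0 : (algebraMap ℂ (Matrix (Fin n) (Fin n) ℂ) μ - D).det = 0 := by
        by_contra hne
        apply h
        have : IsUnit (algebraMap ℂ (Matrix (Fin n) (Fin n) ℂ) μ - D) :=
          (Matrix.isUnit_iff_isUnit_det _).2 (isUnit_iff_ne_zero.2 hne)
        exact (hPunit.mul this).mul hPinvunit
      rw [hDdet] at hdet0
      obtain ⟨k, _, hk⟩ := Finset.prod_eq_zero_iff.1 hdet0
      refine ⟨(k : ℕ) + 1, ?_, ?_⟩
      · rw [Finset.mem_Icc]
        exact ⟨Nat.succ_le_succ (Nat.zero_le _), Nat.succ_le_of_lt k.isLt⟩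
      · rw [sub_eq_zero] at hk
        exact hk.symm
    · rintro ⟨k, hk, hkeq⟩ hu
      rw [Finset.mem_Icc] at hk
      have hk0 : IsUnit ((algebraMap ℂ (Matrix (Fin n) (Fin n) ℂ) μ - D).det) := by
        have := ((Matrix.isUnit_iff_isUnit_det _).1 hu)
        rw [hdet, Matrix.det_nonsing_inv] at this
        rcases isUnit_of_mul_isUnit_left this with h2
        exact isUnit_of_mul_isUnit_right h2
      rw [hDdet, isUnit_iff_ne_zero] at hk0
      apply hk0
      apply Finset.prod_eq_zero (Finset.mem_univ (⟨k - 1, by omega⟩ : Fin n))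
      have : ((⟨k - 1, by omega⟩ : Fin n) : ℕ) + 1 = k := by simp; omega
      rw [this, hkeq, sub_self]
  · rw [hdetA, hprodconv]
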